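/- Let c₀ > 0 and m, m_σ : 𝕋^d → (0,∞) measurable with m ≥ c₀ everywhere. Then |∫_{𝕋^d} (log m_σ - log m) dx| ≤ (2/c₀) ∫_{{m_σ ≤ c₀/2}} (m - m_σ)(log m - log m_σ) dx + (2/c₀) ∫_{𝕋^d} |m_σ - m| dx. -/

import Mathlib

open MeasureTheory

/-- The unit cube `Q = (-1/2, 1/2)^d`, a fundamental domain for `𝕋^d`. -/
def Qcube (d : ℕ) : Set (EuclideanSpace ℝ (Fin d)) :=
  {x | ∀ i, x i ∈ Set.Ioo (-(1 / 2) : ℝ) (1 / 2)}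

lemma log_lip {c : ℝ} (hc : 0 < c) {a b : ℝ} (ha : c ≤ a) (hb : c ≤ b) :
    |Real.log a - Real.log b| ≤ (1 / c) * |a - b| := by
  wlog h : b ≤ a generalizing a b
  · rw [abs_sub_comm, abs_sub_comm a b]; exact this hb ha (le_of_not_ge h)
  have hb0 : 0 < b := hc.trans_le hb
  have ha0 : 0 < a := hc.trans_le ha
  rw [abs_of_nonneg (sub_nonneg.2 (Real.log_le_log hb0 h)),
    abs_of_nonneg (sub_nonneg.2 h), ← Real.log_div ha0.ne' hb0.ne']
  have h1 : Real.log (a / b) ≤ a / b - 1 :=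
    Real.log_le_sub_one_of_pos (div_pos ha0 hb0)
  have h2 : a / b - 1 = (a - b) / b := by field_simp
  have h3 : (a - b) / b ≤ (a - b) / c :=
    div_le_div_of_nonneg_left (sub_nonneg.2 h) hc hb
  calc Real.log (a / b) ≤ (a - b) / b := by rw [← h2]; exact h1
    _ ≤ (a - b) / c := h3
    _ = (1 / c) * (a - b) := by ring

/-- Logarithm splitting estimate: for `m ≥ c₀ > 0` and `m_σ > 0`,
`|∫ (log m_σ - log m)| ≤ (2/c₀) ∫_{m_σ ≤ c₀/2} (m - m_σ)(log m - log m_σ)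
  + (2/c₀) ∫ |m_σ - m|`. -/
theorem stmt19 {d : ℕ} (c₀ : ℝ) (hc₀ : 0 < c₀)
    (m mσ : EuclideanSpace ℝ (Fin d) → ℝ)
    (hmmeas : Measurable m) (hmσmeas : Measurable mσ)
    (hmlb : ∀ x, c₀ ≤ m x) (hmσpos : ∀ x, 0 < mσ x)
    (hlogint : IntegrableOn (fun x => Real.log (mσ x) - Real.log (m x)) (Qcube d))
    (hcrossint : IntegrableOn
      (fun x => (m x - mσ x) * (Real.log (m x) - Real.log (mσ x)))
      (Qcube d ∩ {x | mσ x ≤ c₀ / 2}))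
    (hdiffint : IntegrableOn (fun x => |mσ x - m x|) (Qcube d)) :
    |∫ x in Qcube d, (Real.log (mσ x) - Real.log (m x))|
      ≤ (2 / c₀) * (∫ x in Qcube d ∩ {x | mσ x ≤ c₀ / 2},
            (m x - mσ x) * (Real.log (m x) - Real.log (mσ x)))
        + (2 / c₀) * ∫ x in Qcube d, |mσ x - m x| := by
  set Q := Qcube d with hQ
  set P : Set (EuclideanSpace ℝ (Fin d)) := {x | mσ x ≤ c₀ / 2} with hP
  set f := fun x => Real.log (mσ x) - Real.log (m x) with hf
  have hPmeas : MeasurableSet P := measurableSet_le hmσmeas measurable_const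
  have hQmeas : MeasurableSet Q := by
    have : Q = ⋂ i, (fun x : EuclideanSpace ℝ (Fin d) => x i) ⁻¹'
        Set.Ioo (-(1 / 2) : ℝ) (1 / 2) := by
      ext x; simp [hQ, Qcube, Set.mem_iInter]
    rw [this]
    exact MeasurableSet.iInter fun i => ((measurable_pi_apply i).comp (WithLp.measurable_ofLp (p := 2) (X := Fin d → ℝ))) measurableSet_Ioo
  have hdisj : Disjoint (Q ∩ P) (Q \ P) :=
    Set.disjoint_left.mpr fun x hx1 hx2 => hx2.2 hx1.2
  have hint1 : IntegrableOn f (Q ∩ P) := hlogint.mono_set Set.inter_subset_left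
  have hint2 : IntegrableOn f (Q \ P) := hlogint.mono_set Set.diff_subset
  have hsplit : ∫ x in Q, f x = (∫ x in Q ∩ P, f x) + ∫ x in Q \ P, f x := by
    rw [← setIntegral_union hdisj (hQmeas.diff hPmeas) hint1 hint2,
      Set.inter_union_diff]
  -- pointwise facts
  have key1 : ∀ x ∈ Q ∩ P, |f x| ≤
      (2 / c₀) * ((m x - mσ x) * (Real.log (m x) - Real.log (mσ x))) := by
    rintro x ⟨-, hxP⟩
    have hm : c₀ ≤ m x := hmlb x
    have hσ : mσ x ≤ c₀ / 2 := hxP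
    have hσpos : 0 < mσ x := hmσpos x
    have hlog : Real.log (mσ x) ≤ Real.log (m x) :=
      Real.log_le_log hσpos (hσ.trans (by linarith))
    have habs : |f x| = Real.log (m x) - Real.log (mσ x) := by
      rw [hf, abs_sub_comm, abs_of_nonneg (sub_nonneg.2 hlog)]
    rw [habs]
    have hms : c₀ / 2 ≤ m x - mσ x := by linarith
    have hLnn : 0 ≤ Real.log (m x) - Real.log (mσ x) := sub_nonneg.2 hlog
    have h2c : (0:ℝ) ≤ 2 / c₀ := by positivity
    have h' := mul_le_mul_of_nonneg_left (mul_le_mul_of_nonneg_right hms hLnn) h2c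
    have heq : (2 / c₀) * ((c₀ / 2) * (Real.log (m x) - Real.log (mσ x)))
        = Real.log (m x) - Real.log (mσ x) := by field_simp
    linarith
  have key2 : ∀ x ∈ Q \ P, |f x| ≤ (2 / c₀) * |mσ x - m x| := by
    rintro x ⟨-, hxP⟩
    have hσ : c₀ / 2 ≤ mσ x := le_of_not_ge hxP
    have hm : c₀ / 2 ≤ m x := le_trans (by linarith) (hmlb x)
    have := log_lip (by positivity : (0:ℝ) < c₀ / 2) hσ hm
    calc |f x| ≤ (1 / (c₀ / 2)) * |mσ x - m x| := this
      _ = (2 / c₀) * |mσ x - m x| := by rw [one_div_div]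
  -- abs of integral
  have habs1 : |∫ x in Q ∩ P, f x| ≤ ∫ x in Q ∩ P, |f x| := by
    simpa [Real.norm_eq_abs] using
      norm_integral_le_integral_norm (μ := volume.restrict (Q ∩ P)) f
  have habs2 : |∫ x in Q \ P, f x| ≤ ∫ x in Q \ P, |f x| := by
    simpa [Real.norm_eq_abs] using
      norm_integral_le_integral_norm (μ := volume.restrict (Q \ P)) f
  have hb1 : ∫ x in Q ∩ P, |f x| ≤
      (2 / c₀) * ∫ x in Q ∩ P, (m x - mσ x) * (Real.log (m x) - Real.log (mσ x)) := by
    rw [← MeasureTheory.integral_const_mul _ _]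
    exact setIntegral_mono_on hint1.abs (hcrossint.const_mul _)
      (hQmeas.inter hPmeas) key1
  have hb2 : ∫ x in Q \ P, |f x| ≤ (2 / c₀) * ∫ x in Q, |mσ x - m x| := by
    have step1 : ∫ x in Q \ P, |f x| ≤ (2 / c₀) * ∫ x in Q \ P, |mσ x - m x| := by
      rw [← MeasureTheory.integral_const_mul _ _]
      exact setIntegral_mono_on hint2.abs
        ((hdiffint.mono_set Set.diff_subset).const_mul _)
        (hQmeas.diff hPmeas) key2
    have step2 : ∫ x in Q \ P, |mσ x - m x| ≤ ∫ x in Q, |mσ x - m x| := by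
      apply setIntegral_mono_set hdiffint
      · exact Filter.Eventually.of_forall fun x => abs_nonneg _
      · exact (Set.diff_subset : Q \ P ⊆ Q).eventuallyLE
    have h2c : (0:ℝ) ≤ 2 / c₀ := by positivity
    calc ∫ x in Q \ P, |f x| ≤ (2 / c₀) * ∫ x in Q \ P, |mσ x - m x| := step1
      _ ≤ (2 / c₀) * ∫ x in Q, |mσ x - m x| := by
          exact mul_le_mul_of_nonneg_left step2 h2c
  calc |∫ x in Q, f x| = |(∫ x in Q ∩ P, f x) + ∫ x in Q \ P, f x| := by rw [hsplit]
    _ ≤ |∫ x in Q ∩ P, f x| + |∫ x in Q \ P, f x| := abs_add_le _ _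
    _ ≤ (∫ x in Q ∩ P, |f x|) + ∫ x in Q \ P, |f x| := add_le_add habs1 habs2
    _ ≤ _ := add_le_add hb1 hb2
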